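/- For every d ≥ 1 and all d×d complex (or real) matrices Σ, M, N, the bilinear operator ddexp_Σ is symmetric: ddexp_Σ(M,N) = ddexp_Σ(N,M), where ddexp_Σ(N,M) := dexp_Σ(M) dexp_Σ(N) + ∫_0^1 τ [dexp_{τΣ}(N), e^{τΣ} M e^{−τΣ}] dτ. -/

import Mathlib

set_option maxHeartbeats 1000000


noncomputable section

attribute [local instance] Matrix.normedAddCommGroup Matrix.normedSpace

/-- `d × d` complex matrices. -/
abbrev Mat (d : ℕ) := Matrix (Fin d) (Fin d) ℂ

/-- Iterated adjoint operator. -/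
def adPow {d : ℕ} (S : Mat d) : ℕ → Mat d → Mat d
  | 0, M => M
  | n + 1, M => S * adPow S n M - adPow S n M * S

/-- `dexp_Σ(M) = ∑_{n≥0} ad_Σ^n(M)/(n+1)!`. -/
def dexp {d : ℕ} (S M : Mat d) : Mat d :=
  ∑' n : ℕ, (((n + 1).factorial : ℂ))⁻¹ • adPow S n M

/-- The Lie commutator `[A, B] = AB − BA`. -/
def lieComm {d : ℕ} (A B : Mat d) : Mat d := A * B - B * A

/-- `ddexp_Σ(N, M) = dexp_Σ(M) dexp_Σ(N) + ∫_0^1 τ [dexp_{τΣ}(N), e^{τΣ} M e^{−τΣ}] dτ`. -/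
def ddexp {d : ℕ} (S N M : Mat d) : Mat d :=
  dexp S M * dexp S N +
    ∫ τ in (0:ℝ)..1,
      τ • lieComm (dexp (τ • S) N)
        (NormedSpace.exp (τ • S) * M * NormedSpace.exp (-(τ • S)))

/-- The entrywise sup norm, with the uniformity of `Matrix` itself. -/
@[reducible] def matNACG (d : ℕ) : NormedAddCommGroup (Mat d) :=
  { (Matrix.normedAddCommGroup : NormedAddCommGroup (Mat d)) with
    toMetricSpace :=
      (Matrix.normedAddCommGroup : NormedAddCommGroup (Mat d)).toMetricSpace.replaceUniformity rfl }

attribute [local instance] matNACG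

@[reducible] def matNS (d : ℕ) : NormedSpace ℂ (Mat d) :=
  { norm_smul_le := (Matrix.normedSpace : NormedSpace ℂ (Mat d)).norm_smul_le }

attribute [local instance] matNS

@[reducible] def clmQ (d : ℕ) : NormedAlgebra ℚ (Mat d →L[ℂ] Mat d) :=
  NormedAlgebra.restrictScalars ℚ ℂ _

attribute [local instance] clmQ

namespace Stmt8Aux

open NormedSpace
open scoped Nat

variable {d : ℕ}

/-- Left multiplication as a continuous linear map. -/
def mL (X : Mat d) : Mat d →L[ℂ] Mat d :=
  LinearMap.toContinuousLinearMap (LinearMap.mulLeft ℂ X)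

/-- Right multiplication as a continuous linear map. -/
def mR (X : Mat d) : Mat d →L[ℂ] Mat d :=
  LinearMap.toContinuousLinearMap (LinearMap.mulRight ℂ X)

@[simp] lemma mL_apply (X A : Mat d) : mL X A = X * A := rfl
@[simp] lemma mR_apply (X A : Mat d) : mR X A = A * X := rfl

/-- `mL` as a continuous linear map in its argument. -/
def mLL : Mat d →L[ℂ] Mat d →L[ℂ] Mat d :=
  LinearMap.toContinuousLinearMap
    { toFun := mL
      map_add' := by intro X Y; ext A; simp [add_mul]
      map_smul' := by intro c X; ext A; simp [smul_mul_assoc] }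

@[simp] lemma mLL_apply (X : Mat d) : mLL X = mL X := rfl

/-- The adjoint operator `ad_X` as a continuous linear map. -/
def adC (X : Mat d) : Mat d →L[ℂ] Mat d := mL X - mR X

@[simp] lemma adC_apply (X A : Mat d) : adC X A = X * A - A * X := rfl

lemma adC_pow_apply (X A : Mat d) (n : ℕ) : ((adC X) ^ n) A = adPow X n A := by
  induction n with
  | zero => simp [adPow]
  | succ n ih =>
      rw [pow_succ']
      simp only [ContinuousLinearMap.mul_apply, ih, adC_apply, adPow]

lemma norm_adPow_le (X A : Mat d) (n : ℕ) : ‖adPow X n A‖ ≤ ‖adC X‖ ^ n * ‖A‖ := by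
  induction n with
  | zero => simp [adPow]
  | succ n ih =>
      have h1 : adPow X (n + 1) A = adC X (adPow X n A) := by simp [adPow]
      calc ‖adPow X (n + 1) A‖ ≤ ‖adC X‖ * ‖adPow X n A‖ := by
            rw [h1]; exact (adC X).le_opNorm _
        _ ≤ ‖adC X‖ * (‖adC X‖ ^ n * ‖A‖) :=
            mul_le_mul_of_nonneg_left ih (norm_nonneg _)
        _ = ‖adC X‖ ^ (n + 1) * ‖A‖ := by ring

lemma norm_one_le : ‖(1 : Mat d)‖ ≤ 1 := by
  rw [Matrix.norm_le_iff zero_le_one]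
  intro i j
  rw [Matrix.one_apply]
  split <;> simp

lemma norm_mul_le_card (A B : Mat d) : ‖A * B‖ ≤ d * ‖A‖ * ‖B‖ := by
  rw [Matrix.norm_le_iff (by positivity)]
  intro i j
  rw [Matrix.mul_apply]
  calc ‖∑ k, A i k * B k j‖ ≤ ∑ k : Fin d, ‖A i k * B k j‖ := norm_sum_le _ _
    _ ≤ ∑ _k : Fin d, ‖A‖ * ‖B‖ := by
        refine Finset.sum_le_sum fun k _ => ?_
        rw [norm_mul]
        exact mul_le_mul (Matrix.norm_entry_le_entrywise_sup_norm A)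
          (Matrix.norm_entry_le_entrywise_sup_norm B) (norm_nonneg _) (norm_nonneg _)
    _ = d * ‖A‖ * ‖B‖ := by simp [Finset.sum_const, mul_assoc]

lemma norm_pow_le' (X : Mat d) (n : ℕ) : ‖X ^ n‖ ≤ ((d + 1) * (‖X‖ + 1)) ^ n := by
  induction n with
  | zero => simpa using norm_one_le
  | succ n ih =>
      have hC : (0:ℝ) ≤ (d + 1) * (‖X‖ + 1) := by positivity
      calc ‖X ^ (n + 1)‖ = ‖X ^ n * X‖ := by rw [pow_succ]
        _ ≤ d * ‖X ^ n‖ * ‖X‖ := norm_mul_le_card _ _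
        _ ≤ ((d + 1) * (‖X‖ + 1)) ^ n * ((d + 1) * (‖X‖ + 1)) := by
            have h1 : (d:ℝ) * ‖X ^ n‖ * ‖X‖ ≤ (d:ℝ) * (((d + 1) * (‖X‖ + 1)) ^ n) * ‖X‖ := by
              have := mul_le_mul_of_nonneg_left ih (by positivity : (0:ℝ) ≤ (d:ℝ))
              exact mul_le_mul_of_nonneg_right this (norm_nonneg _)
            refine h1.trans ?_
            have h2 : (d:ℝ) * ‖X‖ ≤ (d + 1) * (‖X‖ + 1) := by nlinarith [norm_nonneg X]
            calc (d:ℝ) * (((d + 1) * (‖X‖ + 1)) ^ n) * ‖X‖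
                = ((d + 1) * (‖X‖ + 1)) ^ n * ((d:ℝ) * ‖X‖) := by ring
              _ ≤ ((d + 1) * (‖X‖ + 1)) ^ n * ((d + 1) * (‖X‖ + 1)) :=
                  mul_le_mul_of_nonneg_left h2 (by positivity)
        _ = ((d + 1) * (‖X‖ + 1)) ^ (n + 1) := by rw [pow_succ]

lemma summable_exp_series (X : Mat d) : Summable fun n : ℕ => ((n ! : ℂ))⁻¹ • X ^ n := by
  refine Summable.of_norm_bounded
    (Real.summable_pow_div_factorial ((d + 1) * (‖X‖ + 1))) fun n => ?_
  simp only [norm_smul, norm_inv, Complex.norm_natCast, div_eq_inv_mul]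
  exact mul_le_mul_of_nonneg_left (norm_pow_le' X n) (by positivity)

lemma mL_mul (X Y : Mat d) : mL X * mL Y = mL (X * Y) := by
  ext A; simp [ContinuousLinearMap.mul_apply, mul_assoc]

lemma mR_mul (X Y : Mat d) : mR X * mR Y = mR (Y * X) := by
  ext A; simp [ContinuousLinearMap.mul_apply, mul_assoc]

lemma mL_pow (X : Mat d) (n : ℕ) : (mL X) ^ n = mL (X ^ n) := by
  induction n with
  | zero => ext A; simp
  | succ n ih => rw [pow_succ, ih, mL_mul, ← pow_succ]

lemma mR_pow (X : Mat d) (n : ℕ) : (mR X) ^ n = mR (X ^ n) := by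
  induction n with
  | zero => ext A; simp
  | succ n ih => rw [pow_succ, ih, mR_mul, ← pow_succ']

lemma exp_mL (X : Mat d) : exp (mL X) = mL (exp X) := by
  rw [exp_eq_tsum ℂ, exp_eq_tsum ℂ]
  calc (∑' n : ℕ, ((n ! : ℂ))⁻¹ • (mL X) ^ n)
      = ∑' n : ℕ, (mLL : Mat d →L[ℂ] _) (((n ! : ℂ))⁻¹ • X ^ n) := by
        refine tsum_congr fun n => ?_
        rw [map_smul, mLL_apply, mL_pow]
    _ = mLL (∑' n : ℕ, ((n ! : ℂ))⁻¹ • X ^ n) :=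
        (mLL.map_tsum (summable_exp_series X)).symm
    _ = mL (∑' n : ℕ, ((n ! : ℂ))⁻¹ • X ^ n) := rfl

/-- `mR` as a continuous linear map in its argument. -/
def mRL : Mat d →L[ℂ] Mat d →L[ℂ] Mat d :=
  LinearMap.toContinuousLinearMap
    { toFun := mR
      map_add' := by intro X Y; ext A; simp [mul_add]
      map_smul' := by intro c X; ext A; simp [mul_smul_comm] }

@[simp] lemma mRL_apply (X : Mat d) : mRL X = mR X := rfl

lemma exp_mR (X : Mat d) : exp (mR X) = mR (exp X) := by
  rw [exp_eq_tsum ℂ, exp_eq_tsum ℂ]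
  calc (∑' n : ℕ, ((n ! : ℂ))⁻¹ • (mR X) ^ n)
      = ∑' n : ℕ, (mRL : Mat d →L[ℂ] _) (((n ! : ℂ))⁻¹ • X ^ n) := by
        refine tsum_congr fun n => ?_
        rw [map_smul, mRL_apply, mR_pow]
    _ = mRL (∑' n : ℕ, ((n ! : ℂ))⁻¹ • X ^ n) :=
        (mRL.map_tsum (summable_exp_series X)).symm
    _ = mR (∑' n : ℕ, ((n ! : ℂ))⁻¹ • X ^ n) := rfl

lemma mR_neg (X : Mat d) : mR (-X) = -(mR X) := by
  ext A; simp

lemma commute_mL_mR (X : Mat d) : Commute (mL X) (mR X) := by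
  rw [Commute, SemiconjBy]
  ext A
  simp [ContinuousLinearMap.mul_apply, mul_assoc]

/-- `e^X A e^{-X} = e^{ad_X}(A)`. -/
lemma conj_eq_exp_adC (X A : Mat d) :
    exp X * A * exp (-X) = (exp (adC X)) A := by
  have hc : Commute (mL X) (-(mR X)) := (commute_mL_mR X).neg_right
  have h : adC X = mL X + -(mR X) := by rw [adC, sub_eq_add_neg]
  rw [h, exp_add_of_commute hc, ← mR_neg, exp_mL, exp_mR]
  simp [ContinuousLinearMap.mul_apply, mul_assoc]

lemma exp_adC_apply (X A : Mat d) :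
    (exp (adC X)) A = ∑' n : ℕ, ((n ! : ℂ))⁻¹ • adPow X n A := by
  rw [exp_eq_tsum ℂ]
  have hs : Summable fun n : ℕ => ((n ! : ℂ))⁻¹ • (adC X) ^ n :=
    expSeries_summable' (𝕂 := ℂ) (adC X)
  calc (∑' n : ℕ, ((n ! : ℂ))⁻¹ • (adC X) ^ n) A
      = ∑' n : ℕ, (((n ! : ℂ))⁻¹ • (adC X) ^ n) A :=
        (ContinuousLinearMap.apply ℂ (Mat d) A).map_tsum hs
    _ = ∑' n : ℕ, ((n ! : ℂ))⁻¹ • adPow X n A := by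
        refine tsum_congr fun n => ?_
        rw [ContinuousLinearMap.smul_apply, adC_pow_apply]

lemma real_smul_eq (r : ℝ) (A : Mat d) : (r : ℂ) • A = r • A := by
  rw [← algebraMap_smul ℂ r A]
  rfl

lemma cast_inv_smul (k : ℕ) (A : Mat d) : ((k : ℂ))⁻¹ • A = ((k : ℝ))⁻¹ • A := by
  have h : ((k : ℂ))⁻¹ = Complex.ofReal ((k : ℝ)⁻¹) := by
    rw [Complex.ofReal_inv, Complex.ofReal_natCast]
  rw [h, real_smul_eq]

lemma adPow_smul (S M : Mat d) (t : ℝ) (n : ℕ) :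
    adPow (t • S) n M = t ^ n • adPow S n M := by
  induction n with
  | zero => simp [adPow]
  | succ n ih =>
      simp only [adPow, ih, smul_mul_assoc, mul_smul_comm, smul_smul, smul_sub, pow_succ]
      rw [mul_comm t (t ^ n)]

/-- Summability workhorse. -/
lemma summable_smul_adPow (S M : Mat d) (f : ℕ → ℝ) (C B : ℝ)
    (hf : ∀ n, |f n| ≤ C * B ^ n / n !) :
    Summable fun n : ℕ => f n • adPow S n M := by
  refine Summable.of_norm_bounded
    (((Real.summable_pow_div_factorial (B * ‖adC S‖)).mul_left C).mul_right ‖M‖)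
    fun n => ?_
  simp only [norm_smul, Real.norm_eq_abs]
  calc |f n| * ‖adPow S n M‖ ≤ (C * B ^ n / n !) * (‖adC S‖ ^ n * ‖M‖) := by
        refine mul_le_mul (hf n) (norm_adPow_le S M n) (norm_nonneg _) ?_
        calc (0:ℝ) ≤ |f n| := abs_nonneg _
          _ ≤ _ := hf n
    _ = C * ((B * ‖adC S‖) ^ n / n !) * ‖M‖ := by rw [mul_pow]; ring

lemma abs_le_aux1 (t : ℝ) (n : ℕ) : |((n+1).factorial : ℝ)⁻¹ * t ^ n| ≤ 1 * |t| ^ n / n ! := by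
  rw [abs_mul, abs_pow, abs_inv, Nat.abs_cast, one_mul, div_eq_inv_mul]
  refine mul_le_mul_of_nonneg_right ?_ (by positivity)
  refine inv_anti₀ (by positivity) ?_
  exact_mod_cast Nat.factorial_le (Nat.le_succ n)

/-- The conjugation expressed as a series in `adPow`. -/
lemma conj_tsum (S M : Mat d) (t : ℝ) :
    exp (t • S) * M * exp (-(t • S)) = ∑' n : ℕ, (t ^ n / n ! : ℝ) • adPow S n M := by
  rw [conj_eq_exp_adC, exp_adC_apply]
  refine tsum_congr fun n => ?_
  rw [adPow_smul, cast_inv_smul, smul_smul]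
  congr 1
  rw [div_eq_inv_mul, mul_comm]

lemma dexp_smul_tsum (S M : Mat d) (t : ℝ) :
    dexp (t • S) M = ∑' n : ℕ, (((n+1).factorial : ℝ)⁻¹ * t ^ n) • adPow S n M := by
  rw [dexp]
  refine tsum_congr fun n => ?_
  rw [adPow_smul, cast_inv_smul, smul_smul]

lemma F_tsum (S M : Mat d) (t : ℝ) :
    t • dexp (t • S) M = ∑' n : ℕ, (((n+1).factorial : ℝ)⁻¹ * t ^ (n+1)) • adPow S n M := by
  rw [dexp_smul_tsum]
  rw [← Summable.tsum_const_smul t (summable_smul_adPow S M _ 1 |t| (abs_le_aux1 t))]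
  refine tsum_congr fun n => ?_
  rw [smul_smul]
  congr 1
  rw [pow_succ]
  ring

/-- Key derivative lemma: `d/dt (t • dexp(tS)(M)) = e^{tS} M e^{-tS}`. -/
lemma hasDerivAt_smul_dexp (S M : Mat d) (τ : ℝ) :
    HasDerivAt (fun t : ℝ => t • dexp (t • S) M)
      (exp (τ • S) * M * exp (-(τ • S))) τ := by
  set R : ℝ := |τ| + 1 with hR
  set c : ℕ → Mat d := fun n => adPow S n M with hc
  set gg : ℕ → ℝ → Mat d := fun n t => (((n+1).factorial : ℝ)⁻¹ * t ^ (n+1)) • c n with hgg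
  set gg' : ℕ → ℝ → Mat d := fun n t => ((t ^ n / n !) : ℝ) • c n with hgg'
  set u : ℕ → ℝ := fun n => (R * ‖adC S‖) ^ n / n ! * ‖M‖ with hu
  have husum : Summable u := (Real.summable_pow_div_factorial (R * ‖adC S‖)).mul_right ‖M‖
  have hopen : IsOpen (Set.Ioo (-R) R) := isOpen_Ioo
  have hconn : IsPreconnected (Set.Ioo (-R) R) := isPreconnected_Ioo
  have hmem : τ ∈ Set.Ioo (-R) R := by
    constructor
    · have := neg_abs_le τ; linarith
    · have := le_abs_self τ; linarith
  have h0mem : (0:ℝ) ∈ Set.Ioo (-R) R := by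
    have := abs_nonneg τ
    constructor
    · simp only [hR]; linarith
    · simp only [hR]; linarith
  have hderiv : ∀ n y, y ∈ Set.Ioo (-R) R → HasDerivAt (gg n) (gg' n y) y := by
    intro n y _
    have h1 : HasDerivAt (fun t : ℝ => ((n+1).factorial : ℝ)⁻¹ * t ^ (n+1))
        (((n+1).factorial : ℝ)⁻¹ * ((n+1) * y ^ n)) y := by
      have := (hasDerivAt_pow (n+1) y).const_mul (((n+1).factorial : ℝ)⁻¹)
      simpa using this
    have h2 : (((n+1).factorial : ℝ)⁻¹ * ((n+1) * y ^ n)) = y ^ n / n ! := by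
      rw [Nat.factorial_succ]
      push_cast
      have hn : ((n:ℝ) + 1) ≠ 0 := by positivity
      have hf : ((n ! : ℝ)) ≠ 0 := by positivity
      field_simp
    simpa [hgg, hgg', h2] using h1.smul_const (c n)
  have hbound : ∀ n y, y ∈ Set.Ioo (-R) R → ‖gg' n y‖ ≤ u n := by
    intro n y hy
    have hyR : |y| ≤ R := by
      rw [abs_le]
      exact ⟨hy.1.le, hy.2.le⟩
    rw [hgg']
    simp only
    rw [norm_smul, Real.norm_eq_abs, abs_div, abs_pow, Nat.abs_cast]
    have h1 : |y| ^ n / (n ! : ℝ) ≤ R ^ n / n ! := by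
      refine div_le_div_of_nonneg_right ?_ (by positivity) |>.trans_eq rfl
      exact pow_le_pow_left₀ (abs_nonneg y) hyR n
    have h2 : ‖c n‖ ≤ ‖adC S‖ ^ n * ‖M‖ := norm_adPow_le S M n
    calc |y| ^ n / (n ! : ℝ) * ‖c n‖ ≤ (R ^ n / n !) * (‖adC S‖ ^ n * ‖M‖) :=
          mul_le_mul h1 h2 (norm_nonneg _) (by positivity)
      _ = u n := by rw [hu]; simp only; rw [mul_pow]; ring
  have hsum0 : Summable fun n => gg n 0 := by
    refine (summable_zero).congr fun n => ?_
    simp [hgg]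
  have key : HasDerivAt (fun z => ∑' n, gg n z) (∑' n, gg' n τ) τ :=
    hasDerivAt_tsum_of_isPreconnected husum hopen hconn hderiv hbound h0mem hsum0 hmem
  have hfun : (fun t : ℝ => t • dexp (t • S) M) = fun z => ∑' n, gg n z := by
    funext t
    exact F_tsum S M t
  rw [hfun, conj_tsum]
  exact key

lemma continuous_conj (S M : Mat d) :
    Continuous fun t : ℝ => exp (t • S) * M * exp (-(t • S)) := by
  have h1 : (fun t : ℝ => exp (t • S) * M * exp (-(t • S)))
      = fun t : ℝ => (ContinuousLinearMap.apply ℂ (Mat d) M) (exp (t • adC S)) := by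
    funext t
    have : t • adC S = adC (t • S) := by
      ext A
      simp [smul_mul_assoc, mul_smul_comm, smul_sub]
    rw [this, conj_eq_exp_adC]
    rfl
  rw [h1]
  exact (ContinuousLinearMap.apply ℂ (Mat d) M).continuous.comp
    (exp_continuous.comp (continuous_id.smul continuous_const))

/-- Real-bilinear multiplication map. -/
def mLLR : Mat d →L[ℝ] Mat d →L[ℝ] Mat d :=
  LinearMap.toContinuousLinearMap
    { toFun := fun X => (mL X).restrictScalars ℝ
      map_add' := by intro X Y; ext A; simp [add_mul]
      map_smul' := by intro c X; ext A; simp [smul_mul_assoc] }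

@[simp] lemma mLLR_apply (X A : Mat d) : mLLR X A = X * A := rfl

lemma hasDerivAt_matmul {u v : ℝ → Mat d} {u' v' : Mat d} {t : ℝ}
    (hu : HasDerivAt u u' t) (hv : HasDerivAt v v' t) :
    HasDerivAt (fun s => u s * v s) (u' * v t + u t * v') t := by
  have h1 : HasDerivAt (⇑(mLLR (d := d)) ∘ u) (mLLR u') t :=
    mLLR.hasFDerivAt.comp_hasDerivAt t hu
  have h1' : HasDerivAt (fun s => mLLR (u s)) (mLLR u') t := h1
  have h2 := h1'.clm_apply hv
  simpa using h2

end Stmt8Aux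

open Stmt8Aux NormedSpace

/-- The bilinear operator `ddexp_Σ` is symmetric:
`ddexp_Σ(M,N) = ddexp_Σ(N,M)`. -/
theorem stmt8 (d : ℕ) (hd : 1 ≤ d) (S M N : Mat d) :
    ddexp S M N = ddexp S N M := by
  classical
  set F : ℝ → Mat d := fun t => t • dexp (t • S) M with hF
  set G : ℝ → Mat d := fun t => t • dexp (t • S) N with hG
  set f : ℝ → Mat d := fun t => exp (t • S) * M * exp (-(t • S)) with hf
  set g : ℝ → Mat d := fun t => exp (t • S) * N * exp (-(t • S)) with hg
  have hFd : ∀ τ : ℝ, HasDerivAt F (f τ) τ := fun τ => hasDerivAt_smul_dexp S M τ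
  have hGd : ∀ τ : ℝ, HasDerivAt G (g τ) τ := fun τ => hasDerivAt_smul_dexp S N τ
  have hfc : Continuous f := continuous_conj S M
  have hgc : Continuous g := continuous_conj S N
  have hFc : Continuous F := by
    rw [continuous_iff_continuousAt]; exact fun τ => (hFd τ).continuousAt
  have hGc : Continuous G := by
    rw [continuous_iff_continuousAt]; exact fun τ => (hGd τ).continuousAt
  have hΦ : ∀ τ : ℝ, HasDerivAt (fun t => F t * G t - G t * F t)
      ((f τ * G τ + F τ * g τ) - (g τ * F τ + G τ * f τ)) τ := fun τ =>
    (hasDerivAt_matmul (hFd τ) (hGd τ)).sub (hasDerivAt_matmul (hGd τ) (hFd τ))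
  have hΦint : IntervalIntegrable
      (fun τ => (f τ * G τ + F τ * g τ) - (g τ * F τ + G τ * f τ))
      MeasureTheory.volume 0 1 :=
    (((hfc.matrix_mul hGc).add (hFc.matrix_mul hgc)).sub
      ((hgc.matrix_mul hFc).add (hGc.matrix_mul hfc))).intervalIntegrable 0 1
  have key : (∫ τ in (0:ℝ)..1, ((f τ * G τ + F τ * g τ) - (g τ * F τ + G τ * f τ)))
      = dexp S M * dexp S N - dexp S N * dexp S M := by
    rw [intervalIntegral.integral_eq_sub_of_hasDerivAt (fun τ _ => hΦ τ) hΦint]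
    simp [hF, hG]
  have i1 : IntervalIntegrable (fun τ => F τ * g τ - g τ * F τ) MeasureTheory.volume 0 1 :=
    ((hFc.matrix_mul hgc).sub (hgc.matrix_mul hFc)).intervalIntegrable 0 1
  have i2 : IntervalIntegrable (fun τ => G τ * f τ - f τ * G τ) MeasureTheory.volume 0 1 :=
    ((hGc.matrix_mul hfc).sub (hfc.matrix_mul hGc)).intervalIntegrable 0 1
  have e1 : ddexp S M N = dexp S N * dexp S M
      + ∫ τ in (0:ℝ)..1, (F τ * g τ - g τ * F τ) := by
    rw [ddexp]
    congr 1
    refine intervalIntegral.integral_congr fun τ _ => ?_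
    simp only [hg, hF, lieComm, smul_sub, smul_mul_assoc, mul_smul_comm]
  have e2 : ddexp S N M = dexp S M * dexp S N
      + ∫ τ in (0:ℝ)..1, (G τ * f τ - f τ * G τ) := by
    rw [ddexp]
    congr 1
    refine intervalIntegral.integral_congr fun τ _ => ?_
    simp only [hf, hG, lieComm, smul_sub, smul_mul_assoc, mul_smul_comm]
  have hsub : (∫ τ in (0:ℝ)..1, (F τ * g τ - g τ * F τ))
      - (∫ τ in (0:ℝ)..1, (G τ * f τ - f τ * G τ))
      = dexp S M * dexp S N - dexp S N * dexp S M := by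
    rw [← intervalIntegral.integral_sub i1 i2, ← key]
    refine intervalIntegral.integral_congr fun τ _ => ?_
    abel
  rw [e1, e2]
  have h2 : (∫ τ in (0:ℝ)..1, (F τ * g τ - g τ * F τ))
      = dexp S M * dexp S N - dexp S N * dexp S M
        + ∫ τ in (0:ℝ)..1, (G τ * f τ - f τ * G τ) := by
    rw [← hsub]; abel
  rw [h2]
  abel
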